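/- Suppose real numbers A₀, A₁, ..., A_{k−1} satisfy A_l ≥ (1/l)·A_{k−l} + ((k−l)/(k−l+1))·A_{l−1} for every l = 1, ..., k−1. Then 0 ≥ ((k−1)/k)·A₀. In particular, if additionally A₀ ≥ 0, then A₀ = 0. -/

import Mathlib

/-- If reals `A₀, …, A_{k-1}` satisfy `A_l ≥ (1/l) A_{k-l} + ((k-l)/(k-l+1)) A_{l-1}`
for `l = 1, …, k-1`, then `0 ≥ ((k-1)/k) A₀`; in particular if `A₀ ≥ 0` then `A₀ = 0`. -/
theorem eigenvector_iteration (k : ℕ) (hk : 2 ≤ k) (A : ℕ → ℝ)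
    (hA : ∀ l : ℕ, 1 ≤ l → l ≤ k - 1 →
      A l ≥ (1 / (l : ℝ)) * A (k - l) + (((k : ℝ) - (l : ℝ)) / ((k : ℝ) - (l : ℝ) + 1)) * A (l - 1)) :
    0 ≥ (((k : ℝ) - 1) / (k : ℝ)) * A 0 ∧ (0 ≤ A 0 → A 0 = 0) := by
  obtain ⟨m, rfl⟩ : ∃ m, k = m + 2 := ⟨k - 2, by omega⟩
  set k := m + 2 with hkdef
  have hkR : (k : ℝ) = (m : ℝ) + 2 := by push_cast [hkdef]; ring
  -- the main summed inequality
  have key : ∑ i ∈ Finset.range (m + 1),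
      ((1 / ((i + 1 : ℕ) : ℝ)) * A (k - (i + 1)) +
        (((k : ℝ) - ((i + 1 : ℕ) : ℝ)) / ((k : ℝ) - ((i + 1 : ℕ) : ℝ) + 1)) * A ((i + 1) - 1))
      ≤ ∑ i ∈ Finset.range (m + 1), A (i + 1) := by
    apply Finset.sum_le_sum
    intro i hi
    simp only [Finset.mem_range] at hi
    exact hA (i + 1) (by omega) (by omega)
  rw [Finset.sum_add_distrib] at key
  -- reindex the first sum
  have e1 : ∑ i ∈ Finset.range (m + 1), (1 / ((i + 1 : ℕ) : ℝ)) * A (k - (i + 1))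
      = ∑ i ∈ Finset.range (m + 1), (1 / ((k : ℝ) - ((i + 1 : ℕ) : ℝ))) * A (i + 1) := by
    rw [← Finset.sum_range_reflect]
    apply Finset.sum_congr rfl
    intro j hj
    simp only [Finset.mem_range] at hj
    have h1 : k - (m + 1 - 1 - j + 1) = j + 1 := by omega
    have h2 : ((m + 1 - 1 - j + 1 : ℕ) : ℝ) = (m : ℝ) + 1 - (j : ℝ) := by
      have h : (m + 1 - 1 - j + 1 : ℕ) = m + 1 - j := by omega
      rw [h]
      push_cast [Nat.cast_sub (by omega : j ≤ m + 1)]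
      ring
    rw [h1, h2]
    congr 1
    rw [hkR]
    push_cast
    congr 1
    ring
  -- reindex the second sum
  have e2 : ∑ i ∈ Finset.range (m + 1),
      (((k : ℝ) - ((i + 1 : ℕ) : ℝ)) / ((k : ℝ) - ((i + 1 : ℕ) : ℝ) + 1)) * A ((i + 1) - 1)
      = (((k : ℝ) - 1) / (k : ℝ)) * A 0 +
        ∑ i ∈ Finset.range (m + 1),
          (((k : ℝ) - ((i + 1 : ℕ) : ℝ) - 1) / ((k : ℝ) - ((i + 1 : ℕ) : ℝ))) * A (i + 1) := by
    rw [Finset.sum_range_succ' _ m, Finset.sum_range_succ]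
    have hz : (((k : ℝ) - ((m + 1 : ℕ) : ℝ) - 1) / ((k : ℝ) - ((m + 1 : ℕ) : ℝ))) * A (m + 1)
        = 0 := by
      rw [hkR]; push_cast
      have h : (m : ℝ) + 2 - ((m : ℝ) + 1) - 1 = 0 := by ring
      rw [h]; simp
    rw [hz, add_zero, add_comm]
    congr 1
    · norm_num
    · apply Finset.sum_congr rfl
      intro i hi
      have hidx : (i + 1 + 1) - 1 = i + 1 := by omega
      rw [hidx]
      congr 1
      rw [hkR]
      push_cast
      congr 1 <;> ring
  rw [e1, e2] at key
  -- combine the two sums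
  have e3 : ∑ i ∈ Finset.range (m + 1), (1 / ((k : ℝ) - ((i + 1 : ℕ) : ℝ))) * A (i + 1) +
      ∑ i ∈ Finset.range (m + 1),
        (((k : ℝ) - ((i + 1 : ℕ) : ℝ) - 1) / ((k : ℝ) - ((i + 1 : ℕ) : ℝ))) * A (i + 1)
      = ∑ i ∈ Finset.range (m + 1), A (i + 1) := by
    rw [← Finset.sum_add_distrib]
    apply Finset.sum_congr rfl
    intro i hi
    simp only [Finset.mem_range] at hi
    have hi' : (i : ℝ) ≤ (m : ℝ) := by exact_mod_cast Nat.lt_succ_iff.mp hi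
    have hd : (k : ℝ) - ((i + 1 : ℕ) : ℝ) ≠ 0 := by
      push_cast [hkR]
      intro h; linarith
    have hone : 1 / ((k : ℝ) - ((i + 1 : ℕ) : ℝ)) +
        ((k : ℝ) - ((i + 1 : ℕ) : ℝ) - 1) / ((k : ℝ) - ((i + 1 : ℕ) : ℝ)) = 1 := by
      field_simp
      ring
    rw [← add_mul, hone, one_mul]
  have final : 0 ≥ (((k : ℝ) - 1) / (k : ℝ)) * A 0 := by linarith [key, e3]
  refine ⟨final, fun h0 => ?_⟩
  have hc : 0 < ((k : ℝ) - 1) / (k : ℝ) := by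
    rw [hkR]
    have hm : (0 : ℝ) ≤ (m : ℝ) := Nat.cast_nonneg m
    apply div_pos <;> linarith
  have h2 : 0 ≤ (((k : ℝ) - 1) / (k : ℝ)) * A 0 := mul_nonneg hc.le h0
  have h3 : (((k : ℝ) - 1) / (k : ℝ)) * A 0 = 0 := le_antisymm final h2
  exact (mul_eq_zero.mp h3).resolve_left (ne_of_gt hc)
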